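/- For every initial point (x₀, y₀) ∈ ℝ², there exists a differentiable curve γ : ℝ → ℝ × ℝ, defined on all of ℝ, such that γ(0) = (x₀, y₀) and for all t ∈ ℝ the derivative of the first component equals 1 and the derivative of the second component y(t) equals 2·y(t)²·(sin y(t))². In other words, the planar vector field (x,y) ↦ (1, 2y² sin²(y)), viewed as a connection on the projection ℝ² → ℝ onto the first coordinate, is complete: every integral curve extends to all of ℝ. -/

import Mathlib

open Real Set Filter MeasureTheory intervalIntegral
open scoped Topology

set_option maxHeartbeats 2000000 in
lemma sinField_key (y₀ : ℝ) (hs0 : Real.sin y₀ ≠ 0) :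
    ∃ y : ℝ → ℝ, y 0 = y₀ ∧
      ∀ t : ℝ, HasDerivAt y (2 * (y t) ^ 2 * Real.sin (y t) ^ 2) t := by
  set k : ℤ := ⌊y₀ / π⌋ with hk
  set a : ℝ := k * π with hadef
  set b : ℝ := a + π with hbdef
  have hπ : (0:ℝ) < π := Real.pi_pos
  -- y₀ ∈ Ioo a b
  have hay : a < y₀ := by
    have hle : a ≤ y₀ := by
      have := Int.floor_le (y₀ / π)
      calc a = (k:ℝ) * π := rfl
      _ ≤ (y₀ / π) * π := mul_le_mul_of_nonneg_right this hπ.le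
      _ = y₀ := by field_simp
    rcases hle.lt_or_eq with h | h
    · exact h
    · exact absurd (h ▸ Real.sin_int_mul_pi k) hs0
  have hyb : y₀ < b := by
    have := Int.lt_floor_add_one (y₀ / π)
    have : y₀ / π < (k : ℝ) + 1 := this
    calc y₀ = (y₀ / π) * π := by field_simp
    _ < ((k:ℝ) + 1) * π := by exact mul_lt_mul_of_pos_right this hπ
    _ = b := by ring
  have hab : a < b := hay.trans hyb
  -- sin ≠ 0 on Ioo a b
  have hsin : ∀ y ∈ Ioo a b, Real.sin y ≠ 0 := by
    rintro y ⟨h1, h2⟩ hzero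
    obtain ⟨n, hn⟩ := Real.sin_eq_zero_iff.mp hzero
    rw [← hn] at h1 h2
    have h1' : (k:ℝ) < n := lt_of_mul_lt_mul_right h1 hπ.le
    have h2' : (n:ℝ) < k + 1 := by
      have : (n:ℝ) * π < ((k:ℝ)+1) * π := by rw [hbdef] at h2; linarith
      exact lt_of_mul_lt_mul_right this hπ.le
    have h1'' : k < n := by exact_mod_cast h1'
    have h2'' : n < k + 1 := by exact_mod_cast h2'
    omega
  have hfpos : ∀ y ∈ Ioo a b, 0 < 2 * y ^ 2 * Real.sin y ^ 2 := by
    intro y hy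
    have hsy := hsin y hy
    have hy0 : y ≠ 0 := fun h => hsy (h ▸ Real.sin_zero)
    have h1 : 0 < y ^ 2 := by positivity
    have h2 : 0 < Real.sin y ^ 2 := by positivity
    nlinarith
  -- the integrand
  set g : ℝ → ℝ := fun s => (2 * s ^ 2 * Real.sin s ^ 2)⁻¹ with hgdef
  have hgpos : ∀ y ∈ Ioo a b, 0 < g y := fun y hy => inv_pos.mpr (hfpos y hy)
  have hfc : Continuous (fun s : ℝ => 2 * s ^ 2 * Real.sin s ^ 2) := by continuity
  have hgcont : ∀ y ∈ Ioo a b, ContinuousAt g y := by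
    intro y hy
    exact hfc.continuousAt.inv₀ (hfpos y hy).ne'
  have hgmeas : Measurable g := (hfc.measurable).inv
  have hsub : ∀ y ∈ Ioo a b, ∀ z ∈ Ioo a b, uIcc y z ⊆ Ioo a b := by
    intro y hy z hz
    exact (Set.ordConnected_Ioo (a := a) (b := b)).uIcc_subset hy hz
  have hgint : ∀ y ∈ Ioo a b, ∀ z ∈ Ioo a b, IntervalIntegrable g volume y z := by
    intro y hy z hz
    apply ContinuousOn.intervalIntegrable
    exact fun s hsm => (hgcont s (hsub y hy z hz hsm)).continuousWithinAt
  have hy₀ : y₀ ∈ Ioo a b := ⟨hay, hyb⟩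
  set F : ℝ → ℝ := fun y => ∫ s in y₀..y, g s with hFdef
  have hF : ∀ y ∈ Ioo a b, HasDerivAt F (g y) y := by
    intro y hy
    exact intervalIntegral.integral_hasDerivAt_right (hgint y₀ hy₀ y hy)
      hgmeas.stronglyMeasurable.stronglyMeasurableAtFilter
      (hgcont y hy)
  have hFcont : ContinuousOn F (Ioo a b) :=
    fun y hy => (hF y hy).continuousAt.continuousWithinAt
  have hFmono : StrictMonoOn F (Ioo a b) := by
    apply strictMonoOn_of_deriv_pos (convex_Ioo a b) hFcont
    intro y hy
    rw [interior_Ioo] at hy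
    rw [(hF y hy).deriv]
    exact hgpos y hy
  -- bounds on f near the endpoints
  set C : ℝ := 2 * (|a| + π) ^ 2 with hCdef
  have hCpos : 0 < C := by positivity
  have habs : ∀ y ∈ Ioo a b, y ^ 2 ≤ (|a| + π) ^ 2 := by
    rintro y ⟨h1, h2⟩
    have h3 : -(|a| + π) ≤ y := by
      have := neg_abs_le a; linarith
    have h4 : y ≤ |a| + π := by
      have := le_abs_self a; rw [hbdef] at h2; linarith
    exact sq_le_sq' h3 h4
  have hsinb : ∀ y : ℝ, Real.sin y ^ 2 ≤ (b - y) ^ 2 := by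
    intro y
    have h1 : Real.sin y = (-1 : ℝ) ^ (k+1) * Real.sin (y - b) := by
      have := Real.sin_add_int_mul_pi (y - b) (k + 1)
      have heq : y - b + (↑(k+1)) * π = y := by
        push_cast; rw [hbdef, hadef]; ring
      rw [heq] at this
      rw [this]
    have h2 : |Real.sin (y - b)| ≤ |y - b| := Real.abs_sin_le_abs ..
    have hone : ((-1:ℝ) ^ (k+1)) ^ 2 = 1 := by
      rcases Int.even_or_odd (k+1) with he | ho
      · rw [he.neg_one_zpow]; norm_num
      · rw [ho.neg_one_zpow]; norm_num
    have h3 : Real.sin y ^ 2 = Real.sin (y - b) ^ 2 := by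
      rw [h1, mul_pow, hone, one_mul]
    rw [h3]
    calc Real.sin (y - b) ^ 2 = |Real.sin (y - b)| ^ 2 := (sq_abs _).symm
    _ ≤ |y - b| ^ 2 := pow_le_pow_left₀ (abs_nonneg _) h2 2
    _ = (y - b) ^ 2 := sq_abs _
    _ = (b - y) ^ 2 := by ring

  have hsina : ∀ y : ℝ, Real.sin y ^ 2 ≤ (y - a) ^ 2 := by
    intro y
    have h1 : Real.sin y = (-1:ℝ) ^ k * Real.sin (y - a) := by
      have := Real.sin_add_int_mul_pi (y - a) k
      have heq : y - a + (k:ℝ) * π = y := by rw [hadef]; ring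
      rw [heq] at this
      rw [this]
    have h2 : |Real.sin (y - a)| ≤ |y - a| := Real.abs_sin_le_abs ..
    have hone : ((-1:ℝ) ^ k) ^ 2 = 1 := by
      rcases Int.even_or_odd k with he | ho
      · rw [he.neg_one_zpow]; norm_num
      · rw [ho.neg_one_zpow]; norm_num
    have h3 : Real.sin y ^ 2 = Real.sin (y - a) ^ 2 := by
      rw [h1, mul_pow, hone, one_mul]
    rw [h3]
    calc Real.sin (y - a) ^ 2 = |Real.sin (y - a)| ^ 2 := (sq_abs _).symm
    _ ≤ |y - a| ^ 2 := pow_le_pow_left₀ (abs_nonneg _) h2 2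
    _ = (y - a) ^ 2 := sq_abs _
  have hgeb : ∀ y ∈ Ioo a b, (C * (b - y) ^ 2)⁻¹ ≤ g y := by
    intro y hy
    have h1 : 2 * y ^ 2 * Real.sin y ^ 2 ≤ C * (b - y) ^ 2 := by
      have ha1 := habs y hy
      have ha2 := hsinb y
      have : 2 * y ^ 2 * Real.sin y ^ 2 ≤ 2 * (|a| + π) ^ 2 * (b - y) ^ 2 := by
        nlinarith [sq_nonneg y, sq_nonneg (Real.sin y)]
      rw [hCdef]
      exact this
    exact inv_anti₀ (hfpos y hy) h1
  have hgea : ∀ y ∈ Ioo a b, (C * (y - a) ^ 2)⁻¹ ≤ g y := by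
    intro y hy
    have h1 : 2 * y ^ 2 * Real.sin y ^ 2 ≤ C * (y - a) ^ 2 := by
      have ha1 := habs y hy
      have ha2 := hsina y
      have : 2 * y ^ 2 * Real.sin y ^ 2 ≤ 2 * (|a| + π) ^ 2 * (y - a) ^ 2 := by
        nlinarith [sq_nonneg y, sq_nonneg (Real.sin y)]
      rw [hCdef]
      exact this
    exact inv_anti₀ (hfpos y hy) h1
  -- lower bound for F near b
  have key_b : ∀ y ∈ Ico y₀ b, C⁻¹ * (b - y)⁻¹ - C⁻¹ * (b - y₀)⁻¹ ≤ F y := by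
    rintro y ⟨h1, h2⟩
    have hIccsub : Icc y₀ y ⊆ Ioo a b := fun s hs => ⟨hay.trans_le hs.1, lt_of_le_of_lt hs.2 h2⟩
    have huIcc : uIcc y₀ y = Icc y₀ y := uIcc_of_le h1
    have hderiv : ∀ s ∈ uIcc y₀ y,
        HasDerivAt (fun u => C⁻¹ * (b - u)⁻¹) ((C * (b - s) ^ 2)⁻¹) s := by
      intro s hs
      rw [huIcc] at hs
      have hbs : b - s ≠ 0 := (sub_pos.mpr (hIccsub hs).2).ne'
      have hd : HasDerivAt (fun u : ℝ => b - u) (-1) s := (hasDerivAt_id s).const_sub b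
      have := (hd.inv hbs).const_mul (C⁻¹)
      refine this.congr_deriv ?_
      field_simp
    have hcont2 : ContinuousOn (fun s => (C * (b - s) ^ 2)⁻¹) (Icc y₀ y) := by
      apply ContinuousOn.inv₀
      · fun_prop
      · intro s hs
        have : b - s ≠ 0 := (sub_pos.mpr (hIccsub hs).2).ne'
        positivity
    have hint2 : IntervalIntegrable (fun s => (C * (b - s) ^ 2)⁻¹) volume y₀ y :=
      (hcont2.mono (by rw [huIcc])).intervalIntegrable
    have heq : ∫ s in y₀..y, (C * (b - s) ^ 2)⁻¹
        = C⁻¹ * (b - y)⁻¹ - C⁻¹ * (b - y₀)⁻¹ :=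
      intervalIntegral.integral_eq_sub_of_hasDerivAt hderiv hint2
    rw [← heq]
    apply intervalIntegral.integral_mono_on h1 hint2
      (hgint y₀ hy₀ y ⟨hay.trans_le h1, h2⟩)
    intro s hs
    exact hgeb s (hIccsub hs)
  -- upper bound for F near a
  have key_a : ∀ y ∈ Ioc a y₀, F y ≤ C⁻¹ * (y₀ - a)⁻¹ - C⁻¹ * (y - a)⁻¹ := by
    rintro y ⟨h1, h2⟩
    have hyI : y ∈ Ioo a b := ⟨h1, lt_of_le_of_lt h2 hyb⟩
    have hIccsub : Icc y y₀ ⊆ Ioo a b := fun s hs =>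
      ⟨lt_of_lt_of_le h1 hs.1, lt_of_le_of_lt hs.2 hyb⟩
    have huIcc : uIcc y y₀ = Icc y y₀ := uIcc_of_le h2
    have hderiv : ∀ s ∈ uIcc y y₀,
        HasDerivAt (fun u => -(C⁻¹ * (u - a)⁻¹)) ((C * (s - a) ^ 2)⁻¹) s := by
      intro s hs
      rw [huIcc] at hs
      have has : s - a ≠ 0 := (sub_pos.mpr (hIccsub hs).1).ne'
      have hd : HasDerivAt (fun u : ℝ => u - a) 1 s := (hasDerivAt_id s).sub_const a
      have := ((hd.inv has).const_mul (C⁻¹)).neg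
      refine this.congr_deriv ?_
      field_simp
    have hcont2 : ContinuousOn (fun s => (C * (s - a) ^ 2)⁻¹) (Icc y y₀) := by
      apply ContinuousOn.inv₀
      · fun_prop
      · intro s hs
        have : s - a ≠ 0 := (sub_pos.mpr (hIccsub hs).1).ne'
        positivity
    have hint2 : IntervalIntegrable (fun s => (C * (s - a) ^ 2)⁻¹) volume y y₀ :=
      (hcont2.mono (by rw [huIcc])).intervalIntegrable
    have heq : ∫ s in y..y₀, (C * (s - a) ^ 2)⁻¹
        = -(C⁻¹ * (y₀ - a)⁻¹) - -(C⁻¹ * (y - a)⁻¹) :=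
      intervalIntegral.integral_eq_sub_of_hasDerivAt hderiv hint2
    have hcomp : ∫ s in y..y₀, (C * (s - a) ^ 2)⁻¹ ≤ ∫ s in y..y₀, g s := by
      apply intervalIntegral.integral_mono_on h2 hint2 (hgint y hyI y₀ hy₀)
      intro s hs
      exact hgea s (hIccsub hs)
    have hsymm : F y = -∫ s in y..y₀, g s := by
      rw [hFdef]
      simp [intervalIntegral.integral_symm y₀ y]
    rw [hsymm]
    rw [heq] at hcomp
    linarith
  -- divergence of F at the endpoints
  have htop : Tendsto F (𝓝[<] b) atTop := by
    have hev : (fun y => C⁻¹ * (b - y)⁻¹ - C⁻¹ * (b - y₀)⁻¹) ≤ᶠ[𝓝[<] b] F := by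
      filter_upwards [Ico_mem_nhdsLT_of_mem (right_mem_Ioc.mpr hyb)] with y hy
      exact key_b y hy
    refine tendsto_atTop_mono' _ hev ?_
    · have h1 : Tendsto (fun y : ℝ => b - y) (𝓝[<] b) (𝓝[>] 0) := by
        apply tendsto_nhdsWithin_of_tendsto_nhds_of_eventually_within
        · have : Tendsto (fun y : ℝ => b - y) (𝓝 b) (𝓝 (b - b)) :=
            (continuous_const.sub continuous_id).tendsto b
          rw [sub_self] at this
          exact this.mono_left nhdsWithin_le_nhds
        · filter_upwards [self_mem_nhdsWithin] with y hy
          exact sub_pos.mpr (mem_Iio.mp hy)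
      have h2 : Tendsto (fun y : ℝ => (b - y)⁻¹) (𝓝[<] b) atTop :=
        tendsto_inv_nhdsGT_zero.comp h1
      have h3 : Tendsto (fun y : ℝ => C⁻¹ * (b - y)⁻¹) (𝓝[<] b) atTop :=
        h2.const_mul_atTop (inv_pos.mpr hCpos)
      have h4 := tendsto_atTop_add_const_right (𝓝[<] b) (-(C⁻¹ * (b - y₀)⁻¹)) h3
      simpa [sub_eq_add_neg] using h4
  have hbot : Tendsto F (𝓝[>] a) atBot := by
    have hev : F ≤ᶠ[𝓝[>] a] (fun y => C⁻¹ * (y₀ - a)⁻¹ - C⁻¹ * (y - a)⁻¹) := by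
      filter_upwards [Ioc_mem_nhdsGT_of_mem (left_mem_Ico.mpr hay)] with y hy
      exact key_a y hy
    refine tendsto_atBot_mono' _ hev ?_
    · have h1 : Tendsto (fun y : ℝ => y - a) (𝓝[>] a) (𝓝[>] 0) := by
        apply tendsto_nhdsWithin_of_tendsto_nhds_of_eventually_within
        · have : Tendsto (fun y : ℝ => y - a) (𝓝 a) (𝓝 (a - a)) :=
            (continuous_id.sub continuous_const).tendsto a
          rw [sub_self] at this
          exact this.mono_left nhdsWithin_le_nhds
        · filter_upwards [self_mem_nhdsWithin] with y hy
          exact sub_pos.mpr (mem_Ioi.mp hy)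
      have h2 : Tendsto (fun y : ℝ => (y - a)⁻¹) (𝓝[>] a) atTop :=
        tendsto_inv_nhdsGT_zero.comp h1
      have h3 : Tendsto (fun y : ℝ => C⁻¹ * (y - a)⁻¹) (𝓝[>] a) atTop :=
        h2.const_mul_atTop (inv_pos.mpr hCpos)
      have h4 : Tendsto (fun y : ℝ => -(C⁻¹ * (y - a)⁻¹)) (𝓝[>] a) atBot :=
        tendsto_neg_atBot_iff.mpr h3
      have h5 := tendsto_atBot_add_const_left (𝓝[>] a) (C⁻¹ * (y₀ - a)⁻¹) h4
      simpa [sub_eq_add_neg] using h5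
  -- surjectivity of F : Ioo a b → ℝ
  have hsurj : ∀ t : ℝ, ∃ z ∈ Ioo a b, F z = t := by
    intro t
    obtain ⟨y₂, ht2, hy2⟩ :=
      ((htop.eventually_ge_atTop t).and
        (Ioo_mem_nhdsLT_of_mem (right_mem_Ioc.mpr hab) :
          ∀ᶠ y in 𝓝[<] b, y ∈ Ioo a b)).exists
    obtain ⟨y₁, ht1, hy1⟩ :=
      ((hbot.eventually_le_atBot t).and
        (Ioo_mem_nhdsGT_of_mem (left_mem_Ico.mpr hab) :
          ∀ᶠ y in 𝓝[>] a, y ∈ Ioo a b)).exists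
    rcases le_total y₁ y₂ with h | h
    · have hsub2 : Icc y₁ y₂ ⊆ Ioo a b :=
        (Set.ordConnected_Ioo (a := a) (b := b)).out hy1 hy2
      have := intermediate_value_Icc h (hFcont.mono hsub2)
      obtain ⟨z, hz1, hz2⟩ := this ⟨ht1, ht2⟩
      exact ⟨z, hsub2 hz1, hz2⟩
    · have : F y₂ ≤ F y₁ := hFmono.monotoneOn hy2 hy1 h
      exact ⟨y₁, hy1, le_antisymm (by linarith) (by linarith)⟩
  choose Y hY1 hY2 using hsurj
  have hYmono : StrictMono Y := by
    intro t s hts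
    rcases lt_trichotomy (Y t) (Y s) with h | h | h
    · exact h
    · exact absurd (by rw [← hY2 t, ← hY2 s, h]) hts.ne
    · exact absurd (by rw [← hY2 t, ← hY2 s]; exact (hFmono (hY1 s) (hY1 t) h).le)
        (not_le.mpr hts)
  have hrange : range Y = Ioo a b := by
    ext z
    constructor
    · rintro ⟨t, rfl⟩; exact hY1 t
    · intro hz
      exact ⟨F z, hFmono.injOn (hY1 _) hz (hY2 (F z))⟩
  have hYcont : ∀ t, ContinuousAt Y t := by
    intro t
    apply (hYmono.strictMonoOn univ).continuousAt_of_image_mem_nhds univ_mem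
    rw [image_univ, hrange]
    exact isOpen_Ioo.mem_nhds (hY1 t)
  refine ⟨Y, ?_, ?_⟩
  · have h0 : F y₀ = 0 := intervalIntegral.integral_same
    exact hFmono.injOn (hY1 0) hy₀ (by rw [hY2 0, h0])
  · intro t
    have hfd := hF (Y t) (hY1 t)
    have hne : g (Y t) ≠ 0 := (hgpos _ (hY1 t)).ne'
    have hd := HasDerivAt.of_local_left_inverse (hYcont t) hfd hne
      (Filter.Eventually.of_forall fun u => hY2 u)
    have : (g (Y t))⁻¹ = 2 * (Y t) ^ 2 * Real.sin (Y t) ^ 2 := by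
      rw [hgdef]; simp
    rwa [this] at hd

/-- The planar vector field `(x, y) ↦ (1, 2y² sin²(y))` is complete: for every initial
point `(x₀, y₀)` there is a globally defined integral curve through it. -/
theorem complete_connection_sinField :
    ∀ x₀ y₀ : ℝ, ∃ γ : ℝ → ℝ × ℝ,
      γ 0 = (x₀, y₀) ∧
      ∀ t : ℝ,
        HasDerivAt (fun s => (γ s).1) 1 t ∧
        HasDerivAt (fun s => (γ s).2)
          (2 * (γ t).2 ^ 2 * Real.sin ((γ t).2) ^ 2) t := by
  intro x₀ y₀
  by_cases hs : Real.sin y₀ = 0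
  · refine ⟨fun t => (x₀ + t, y₀), by simp, fun t => ⟨?_, ?_⟩⟩
    · simpa using (hasDerivAt_id t).const_add x₀
    · simpa [hs] using hasDerivAt_const t y₀
  · obtain ⟨y, hy0, hy⟩ := sinField_key y₀ hs
    refine ⟨fun t => (x₀ + t, y t), by simp [hy0], fun t => ⟨?_, ?_⟩⟩
    · simpa using (hasDerivAt_id t).const_add x₀
    · simpa using hy t
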